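/- arXiv:2005.12430 — 7 statements merged into one kernel-verified Lean document; each statement's English description precedes it below -/
import Mathlib

section
/- Let μ₀ be a commutative and associative multiplication on A and let (φ_i)_{i≥0} be a formal deformation of μ₀, i.e. φ₀ = μ₀ and for every k ≥ 0 and all x,y,z ∈ A: ∑_{i+j=k} [φ_i(x,φ_j(y,z)) − φ_i(φ_j(x,y),z)] = 0. Then the skew-symmetric part ψ₁ of φ₁ satisfies the Jacobi identity and the Leibniz identity ψ₁(μ₀(x,y),z) = μ₀(x,ψ₁(y,z)) + μ₀(y,ψ₁(x,z)) for all x,y,z ∈ A; that is, (A,μ₀,ψ₁) is a Poisson algebra. -/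
open Finset

/-- The skew-symmetric part of a bilinear multiplication. -/
def skewPart {K A : Type*} [Field K] [AddCommGroup A] [Module K A]
    (φ : A →ₗ[K] A →ₗ[K] A) (x y : A) : A :=
  φ x y - φ y x

/-- If `(φ_i)` is an associative formal deformation of a commutative associative
multiplication `μ₀`, then the skew-symmetric part `ψ₁` of `φ₁` satisfies the Jacobi
identity and the Leibniz identity with `μ₀`: `(A, μ₀, ψ₁)` is a Poisson algebra. -/
theorem deformation_gives_poisson {K A : Type*} [Field K] [CharZero K]
    [AddCommGroup A] [Module K A]
    (μ₀ : A →ₗ[K] A →ₗ[K] A)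
    (hcomm : ∀ x y : A, μ₀ x y = μ₀ y x)
    (hassoc : ∀ x y z : A, μ₀ x (μ₀ y z) = μ₀ (μ₀ x y) z)
    (φ : ℕ → (A →ₗ[K] A →ₗ[K] A))
    (h0 : φ 0 = μ₀)
    (hdef : ∀ k : ℕ, ∀ x y z : A,
      ∑ p ∈ Finset.HasAntidiagonal.antidiagonal k,
        (φ p.1 x (φ p.2 y z) - φ p.1 (φ p.2 x y) z) = 0) :
    (∀ x y z : A,
      skewPart (φ 1) x (skewPart (φ 1) y z) + skewPart (φ 1) y (skewPart (φ 1) z x) +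
        skewPart (φ 1) z (skewPart (φ 1) x y) = 0) ∧
    (∀ x y z : A,
      skewPart (φ 1) (μ₀ x y) z =
        μ₀ x (skewPart (φ 1) y z) + μ₀ y (skewPart (φ 1) x z)) := by
  -- the degree 2 deformation equation
  have hE : ∀ a b c : A,
      μ₀ a (φ 2 b c) - μ₀ (φ 2 a b) c + (φ 1 a (φ 1 b c) - φ 1 (φ 1 a b) c)
        + (φ 2 a (μ₀ b c) - φ 2 (μ₀ a b) c) = 0 := by
    intro a b c
    have h := hdef 2 a b c
    rw [Finset.Nat.sum_antidiagonal_eq_sum_range_succ_mk] at h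
    simp only [Finset.sum_range_succ, Finset.sum_range_zero, h0] at h
    norm_num at h
    linear_combination (norm := abel) h
  -- the degree 1 deformation equation
  have hG : ∀ a b c : A,
      μ₀ a (φ 1 b c) - μ₀ (φ 1 a b) c + (φ 1 a (μ₀ b c) - φ 1 (μ₀ a b) c) = 0 := by
    intro a b c
    have h := hdef 1 a b c
    rw [Finset.Nat.sum_antidiagonal_eq_sum_range_succ_mk] at h
    simp only [Finset.sum_range_succ, Finset.sum_range_zero, h0] at h
    norm_num at h
    linear_combination (norm := abel) h
  constructor
  · intro x y z
    have E1 := hE x y z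
    have E2 := hE x z y
    have E3 := hE y z x
    have E4 := hE y x z
    have E5 := hE z x y
    have E6 := hE z y x
    rw [hcomm (φ 2 x y) z] at E1
    rw [hcomm (φ 2 x z) y, hcomm z y] at E2
    rw [hcomm (φ 2 y z) x, hcomm z x] at E3
    rw [hcomm (φ 2 y x) z, hcomm y x] at E4
    rw [hcomm (φ 2 z x) y, hcomm z x] at E5
    rw [hcomm (φ 2 z y) x, hcomm y x, hcomm z y] at E6
    simp only [skewPart, map_sub, LinearMap.sub_apply]
    linear_combination (norm := abel) E1 - E2 + E3 - E4 + E5 - E6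
  · intro x y z
    have G1 := hG x y z
    have G2 := hG z x y
    have G3 := hG x z y
    rw [hcomm (φ 1 x y) z] at G1
    rw [hcomm (φ 1 z x) y, hcomm z x] at G2
    rw [hcomm (φ 1 x z) y, hcomm z y] at G3
    simp only [skewPart, map_sub, LinearMap.sub_apply]
    linear_combination (norm := abel) -G1 - G2 + G3
end

section
/- Let μ₀ be a commutative and associative multiplication on A. For bilinear maps φ,φ' on A set D(φ,φ')(x,y,z) = φ(x,φ'(y,z)) − φ(φ'(x,y),z). Let (φ_i)_{i≥0} be a weakly associative formal deformation of μ₀, i.e. φ₀ = μ₀ and for every k ≥ 0 and all x,y,z ∈ A: ∑_{i+j=k} [D(φ_i,φ_j)(x,y,z) − D(φ_i,φ_j)(y,x,z) + D(φ_i,φ_j)(y,z,x)] = 0. Then the skew-symmetric part ψ₁ of φ₁ satisfies the Jacobi identity and the Leibniz identity ψ₁(μ₀(x,y),z) = μ₀(x,ψ₁(y,z)) + μ₀(y,ψ₁(x,z)) for all x,y,z ∈ A; that is, (A,μ₀,ψ₁) is a Poisson algebra. -/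
open Finset

/-- `D(φ,φ')(x,y,z) = φ(x,φ'(y,z)) − φ(φ'(x,y),z)`. -/
def defD {K A : Type*} [Field K] [AddCommGroup A] [Module K A]
    (φ φ' : A →ₗ[K] A →ₗ[K] A) (x y z : A) : A :=
  φ x (φ' y z) - φ (φ' x y) z

/-- If `(φ_i)` is a weakly associative formal deformation of a commutative associative
multiplication `μ₀`, then the skew-symmetric part `ψ₁` of `φ₁` satisfies the Jacobi
identity and the Leibniz identity with `μ₀`: `(A, μ₀, ψ₁)` is a Poisson algebra. -/
theorem weakly_associative_deformation_gives_poisson {K A : Type*} [Field K] [CharZero K]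
    [AddCommGroup A] [Module K A]
    (μ₀ : A →ₗ[K] A →ₗ[K] A)
    (hcomm : ∀ x y : A, μ₀ x y = μ₀ y x)
    (hassoc : ∀ x y z : A, μ₀ x (μ₀ y z) = μ₀ (μ₀ x y) z)
    (φ : ℕ → (A →ₗ[K] A →ₗ[K] A))
    (h0 : φ 0 = μ₀)
    (hdef : ∀ k : ℕ, ∀ x y z : A,
      ∑ p ∈ Finset.HasAntidiagonal.antidiagonal k,
        (defD (φ p.1) (φ p.2) x y z - defD (φ p.1) (φ p.2) y x z +
          defD (φ p.1) (φ p.2) y z x) = 0) :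
    (∀ x y z : A,
      skewPart (φ 1) x (skewPart (φ 1) y z) + skewPart (φ 1) y (skewPart (φ 1) z x) +
        skewPart (φ 1) z (skewPart (φ 1) x y) = 0) ∧
    (∀ x y z : A,
      skewPart (φ 1) (μ₀ x y) z =
        μ₀ x (skewPart (φ 1) y z) + μ₀ y (skewPart (φ 1) x z)) := by
  constructor
  · intro x y z
    have h2a := hdef 2 x y z
    have h2b := hdef 2 x z y
    simp only [Finset.Nat.sum_antidiagonal_eq_sum_range_succ_mk, Finset.sum_range_succ,
      Finset.sum_range_zero, defD, h0] at h2a h2b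
    norm_num at h2a h2b
    simp only [skewPart, map_sub, LinearMap.sub_apply]
    linear_combination (norm := module) h2a - h2b
      - hcomm x (φ 2 y z) - hcomm z (φ 2 x y) + hcomm y (φ 2 x z)
      + hcomm z (φ 2 y x) - hcomm y (φ 2 z x) + hcomm x (φ 2 z y)
      - congrArg (fun u => φ 2 x u) (hcomm y z)
      + congrArg (fun u => φ 2 u z) (hcomm x y)
      + congrArg (fun u => φ 2 y u) (hcomm x z)
      + congrArg (fun u => φ 2 u x) (hcomm y z)
      - congrArg (fun u => φ 2 u y) (hcomm x z)
      - congrArg (fun u => φ 2 z u) (hcomm x y)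
  · intro x y z
    have h1 := hdef 1 z x y
    simp only [Finset.Nat.sum_antidiagonal_eq_sum_range_succ_mk, Finset.sum_range_succ,
      Finset.sum_range_zero, defD, h0] at h1
    norm_num at h1
    simp only [skewPart, map_sub, LinearMap.sub_apply]
    linear_combination (norm := module) -h1
      - hcomm y (φ 1 x z) + hcomm y (φ 1 z x) + hcomm z (φ 1 x y)
      - congrArg (fun u => φ 1 u y) (hcomm z x)
      + congrArg (fun u => φ 1 x u) (hcomm y z)
end

section
/- Let μ₀ be a commutative multiplication on A. For bilinear maps φ,φ' on A set D(φ,φ')(x,y,z) = φ(x,φ'(y,z)) − φ(φ'(x,y),z). Let (φ_i)_{i≥0} be a Lie-admissible (V_Lad-) formal deformation of μ₀, i.e. φ₀ = μ₀ and for every k ≥ 0 and all x₁,x₂,x₃ ∈ A: ∑_{i+j=k} ∑_{σ∈S₃} sign(σ)·D(φ_i,φ_j)(x_{σ(1)},x_{σ(2)},x_{σ(3)}) = 0. Then the skew-symmetric part ψ₁ of φ₁ satisfies the Jacobi identity, i.e. φ₁ is a Lie-admissible multiplication on A. -/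
open Equiv Finset

private lemma permSum3 {M : Type*} [AddCommMonoid M] (f : Perm (Fin 3) → M) :
    ∑ σ : Perm (Fin 3), f σ =
      f 1 + f (Equiv.swap 0 1) + f (Equiv.swap 0 2) + f (Equiv.swap 1 2) +
        f (Equiv.swap 0 1 * Equiv.swap 1 2) + f (Equiv.swap 1 2 * Equiv.swap 0 1) := by
  rw [show (Finset.univ : Finset (Perm (Fin 3))) = {1, Equiv.swap 0 1, Equiv.swap 0 2,
      Equiv.swap 1 2, Equiv.swap 0 1 * Equiv.swap 1 2, Equiv.swap 1 2 * Equiv.swap 0 1}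
      from by decide]
  rw [Finset.sum_insert (by decide), Finset.sum_insert (by decide),
    Finset.sum_insert (by decide), Finset.sum_insert (by decide),
    Finset.sum_insert (by decide), Finset.sum_singleton]
  abel

private lemma antiSum2 {M : Type*} [AddCommMonoid M] (g : ℕ × ℕ → M) :
    ∑ p ∈ Finset.HasAntidiagonal.antidiagonal 2, g p = g (0,2) + g (1,1) + g (2,0) := by
  rw [show (Finset.HasAntidiagonal.antidiagonal 2 : Finset (ℕ×ℕ)) = {(0,2),(1,1),(2,0)} from by decide]
  rw [Finset.sum_insert (by decide), Finset.sum_insert (by decide), Finset.sum_singleton]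
  abel

/-- If `(φ_i)` is a Lie-admissible (`V_Lad`-) formal deformation of a commutative
multiplication `μ₀`, then the skew-symmetric part `ψ₁` of `φ₁` satisfies the Jacobi
identity, i.e. `φ₁` is Lie-admissible. -/
theorem vlad_deformation_linear_term_lie_admissible {K A : Type*} [Field K] [CharZero K]
    [AddCommGroup A] [Module K A]
    (μ₀ : A →ₗ[K] A →ₗ[K] A)
    (hcomm : ∀ x y : A, μ₀ x y = μ₀ y x)
    (φ : ℕ → (A →ₗ[K] A →ₗ[K] A))
    (h0 : φ 0 = μ₀)
    (hdef : ∀ k : ℕ, ∀ x : Fin 3 → A,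
      ∑ p ∈ Finset.HasAntidiagonal.antidiagonal k, ∑ σ : Perm (Fin 3), ((Perm.sign σ : ℤ) : K) •
        defD (φ p.1) (φ p.2) (x (σ 0)) (x (σ 1)) (x (σ 2)) = 0) :
    ∀ x y z : A,
      skewPart (φ 1) x (skewPart (φ 1) y z) + skewPart (φ 1) y (skewPart (φ 1) z x) +
        skewPart (φ 1) z (skewPart (φ 1) x y) = 0 := by
  intro x y z
  have H := hdef 2 ![x, y, z]
  rw [antiSum2] at H
  simp only [permSum3, defD] at H
  simp only [Equiv.Perm.sign_one, Equiv.Perm.sign_mul,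
    show Equiv.Perm.sign (Equiv.swap (0:Fin 3) 1) = -1 by decide,
    show Equiv.Perm.sign (Equiv.swap (0:Fin 3) 2) = -1 by decide,
    show Equiv.Perm.sign (Equiv.swap (1:Fin 3) 2) = -1 by decide,
    Equiv.Perm.one_apply, Equiv.Perm.mul_apply, Equiv.swap_apply_left, Equiv.swap_apply_right,
    h0] at H
  norm_num [show ((Equiv.swap 0 1 : Perm (Fin 3)) 2) = 2 by decide,
    show ((Equiv.swap 0 2 : Perm (Fin 3)) 1) = 1 by decide,
    show ((Equiv.swap 1 2 : Perm (Fin 3)) 0) = 0 by decide,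
    Equiv.swap_apply_left, Equiv.swap_apply_right,
    Matrix.cons_val_zero, Matrix.cons_val_one, Matrix.head_cons, Matrix.cons_val_two,
      Matrix.tail_cons] at H
  simp only [skewPart, map_sub, LinearMap.sub_apply]
  linear_combination (norm := abel) H
    - hcomm x (φ 2 y z) - hcomm (φ 2 y x) z - hcomm (φ 2 z y) x
    - hcomm y (φ 2 z x) - hcomm z (φ 2 x y) - hcomm (φ 2 x z) y
    - congrArg (fun t => φ 2 x t) (hcomm y z)
    - congrArg (fun t => φ 2 t z) (hcomm y x)
    - congrArg (fun t => φ 2 y t) (hcomm z x)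
    - congrArg (fun t => φ 2 z t) (hcomm x y)
    - congrArg (fun t => φ 2 t x) (hcomm z y)
    - congrArg (fun t => φ 2 t y) (hcomm x z)
end

section
/- Let μ₀ be a commutative multiplication on A. For bilinear maps φ,φ' on A set D(φ,φ')(x,y,z) = φ(x,φ'(y,z)) − φ(φ'(x,y),z). Let (φ_i)_{i≥0} be a 3-power-associative (V_3Pa-) formal deformation of μ₀, i.e. φ₀ = μ₀ and for every k ≥ 0 and all x₁,x₂,x₃ ∈ A: ∑_{i+j=k} ∑_{σ∈S₃} D(φ_i,φ_j)(x_{σ(1)},x_{σ(2)},x_{σ(3)}) = 0. Then the skew-symmetric part ψ₁ of φ₁ satisfies ψ₁(μ₀(x,y),z) + ψ₁(μ₀(y,z),x) + ψ₁(μ₀(z,x),y) = 0 for all x,y,z ∈ A. -/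
open Equiv Finset

lemma sum_perm_fin3 {M : Type*} [AddCommMonoid M] (f : Perm (Fin 3) → M) :
    ∑ σ : Perm (Fin 3), f σ =
      f 1 + f (Equiv.swap 0 1) + f (Equiv.swap 0 2) + f (Equiv.swap 1 2)
        + f (finRotate 3) + f (finRotate 3 * finRotate 3) := by
  have h : (Finset.univ : Finset (Perm (Fin 3))) =
      {1, Equiv.swap 0 1, Equiv.swap 0 2, Equiv.swap 1 2, finRotate 3, finRotate 3 * finRotate 3} := by
    decide
  rw [h, Finset.sum_insert (by decide), Finset.sum_insert (by decide),
    Finset.sum_insert (by decide), Finset.sum_insert (by decide),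
    Finset.sum_insert (by decide), Finset.sum_singleton]
  abel

/-- If `(φ_i)` is a `3`-power-associative (`V_3Pa`-) formal deformation of a commutative
multiplication `μ₀`, then the skew-symmetric part `ψ₁` of `φ₁` satisfies
`ψ₁(μ₀(x,y),z) + ψ₁(μ₀(y,z),x) + ψ₁(μ₀(z,x),y) = 0`. -/
theorem v3pa_deformation_skew_cyclic {K A : Type*} [Field K] [CharZero K]
    [AddCommGroup A] [Module K A]
    (μ₀ : A →ₗ[K] A →ₗ[K] A)
    (hcomm : ∀ x y : A, μ₀ x y = μ₀ y x)
    (φ : ℕ → (A →ₗ[K] A →ₗ[K] A))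
    (h0 : φ 0 = μ₀)
    (hdef : ∀ k : ℕ, ∀ x : Fin 3 → A,
      ∑ p ∈ Finset.HasAntidiagonal.antidiagonal k, ∑ σ : Perm (Fin 3),
        defD (φ p.1) (φ p.2) (x (σ 0)) (x (σ 1)) (x (σ 2)) = 0) :
    ∀ x y z : A,
      skewPart (φ 1) (μ₀ x y) z + skewPart (φ 1) (μ₀ y z) x +
        skewPart (φ 1) (μ₀ z x) y = 0 := by
  intro x y z
  have h := hdef 1 ![x, y, z]
  rw [show Finset.HasAntidiagonal.antidiagonal 1 = ({(0, 1), (1, 0)} : Finset (ℕ × ℕ)) from by decide,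
    Finset.sum_insert (by decide), Finset.sum_singleton] at h
  rw [sum_perm_fin3, sum_perm_fin3] at h
  simp only [defD, h0, Perm.one_apply,
    show ((Equiv.swap 0 1 : Perm (Fin 3)) 0 = 1) from by decide,
    show ((Equiv.swap 0 1 : Perm (Fin 3)) 1 = 0) from by decide,
    show ((Equiv.swap 0 1 : Perm (Fin 3)) 2 = 2) from by decide,
    show ((Equiv.swap 0 2 : Perm (Fin 3)) 0 = 2) from by decide,
    show ((Equiv.swap 0 2 : Perm (Fin 3)) 1 = 1) from by decide,
    show ((Equiv.swap 0 2 : Perm (Fin 3)) 2 = 0) from by decide,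
    show ((Equiv.swap 1 2 : Perm (Fin 3)) 0 = 0) from by decide,
    show ((Equiv.swap 1 2 : Perm (Fin 3)) 1 = 2) from by decide,
    show ((Equiv.swap 1 2 : Perm (Fin 3)) 2 = 1) from by decide,
    show ((finRotate 3 : Perm (Fin 3)) 0 = 1) from by decide,
    show ((finRotate 3 : Perm (Fin 3)) 1 = 2) from by decide,
    show ((finRotate 3 : Perm (Fin 3)) 2 = 0) from by decide,
    show ((finRotate 3 * finRotate 3 : Perm (Fin 3)) 0 = 2) from by decide,
    show ((finRotate 3 * finRotate 3 : Perm (Fin 3)) 1 = 0) from by decide,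
    show ((finRotate 3 * finRotate 3 : Perm (Fin 3)) 2 = 1) from by decide,
    Matrix.cons_val_zero, Matrix.cons_val_one, Matrix.head_cons,
    show (![x, y, z] 2 = z) from rfl] at h
  -- normalize μ₀ orderings in h
  rw [hcomm y x, hcomm z x, hcomm z y] at h
  simp only [fun a b c : A => hcomm ((φ 1) a b) c] at h
  have h2 : skewPart (φ 1) (μ₀ x y) z + skewPart (φ 1) (μ₀ y z) x +
      skewPart (φ 1) (μ₀ z x) y + (skewPart (φ 1) (μ₀ x y) z + skewPart (φ 1) (μ₀ y z) x +
      skewPart (φ 1) (μ₀ z x) y) = 0 := by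
    apply neg_injective
    rw [neg_zero, ← h]
    simp only [skewPart, hcomm z x]
    abel
  have h3 := (two_smul K (skewPart (φ 1) (μ₀ x y) z + skewPart (φ 1) (μ₀ y z) x +
      skewPart (φ 1) (μ₀ z x) y)).trans h2
  rcases smul_eq_zero.mp h3 with h4 | h4
  · exact absurd h4 two_ne_zero
  · exact h4
end

section
/- Let μ₀ be a commutative multiplication on A. For bilinear maps φ,φ' on A set D(φ,φ')(x,y,z) = φ(x,φ'(y,z)) − φ(φ'(x,y),z). Let (φ_i)_{i≥0} be a (Id+c+c²)-formal deformation of μ₀, i.e. φ₀ = μ₀ and for every k ≥ 0 and all x,y,z ∈ A: ∑_{i+j=k} [D(φ_i,φ_j)(x,y,z) + D(φ_i,φ_j)(y,z,x) + D(φ_i,φ_j)(z,x,y)] = 0. Then the skew-symmetric part ψ₁ of φ₁ satisfies the Jacobi identity and ψ₁(μ₀(x,y),z) + ψ₁(μ₀(y,z),x) + ψ₁(μ₀(z,x),y) = 0 for all x,y,z ∈ A; that is, (A,μ₀,ψ₁) is a weakly Poisson algebra. -/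
open Finset

/-- If `(φ_i)` is an `(Id + c + c²)`-formal deformation of a commutative multiplication
`μ₀`, then the skew-symmetric part `ψ₁` of `φ₁` satisfies the Jacobi identity and the
cyclic identity `ψ₁(μ₀(x,y),z) + ψ₁(μ₀(y,z),x) + ψ₁(μ₀(z,x),y) = 0`, i.e.
`(A, μ₀, ψ₁)` is a weakly Poisson algebra. -/
theorem cyclic_deformation_gives_weakly_poisson {K A : Type*} [Field K] [CharZero K]
    [AddCommGroup A] [Module K A]
    (μ₀ : A →ₗ[K] A →ₗ[K] A)
    (hcomm : ∀ x y : A, μ₀ x y = μ₀ y x)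
    (φ : ℕ → (A →ₗ[K] A →ₗ[K] A))
    (h0 : φ 0 = μ₀)
    (hdef : ∀ k : ℕ, ∀ x y z : A,
      ∑ p ∈ Finset.HasAntidiagonal.antidiagonal k,
        (defD (φ p.1) (φ p.2) x y z + defD (φ p.1) (φ p.2) y z x +
          defD (φ p.1) (φ p.2) z x y) = 0) :
    (∀ x y z : A,
      skewPart (φ 1) x (skewPart (φ 1) y z) + skewPart (φ 1) y (skewPart (φ 1) z x) +
        skewPart (φ 1) z (skewPart (φ 1) x y) = 0) ∧
    (∀ x y z : A,
      skewPart (φ 1) (μ₀ x y) z + skewPart (φ 1) (μ₀ y z) x +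
        skewPart (φ 1) (μ₀ z x) y = 0) := by
  constructor
  · intro x y z
    have h₁ := hdef 2 x y z
    have h₂ := hdef 2 y x z
    rw [show (Finset.HasAntidiagonal.antidiagonal 2 : Finset (ℕ×ℕ)) = {(0,2),(1,1),(2,0)} from rfl] at h₁ h₂
    simp only [Finset.sum_insert, Finset.mem_insert, Finset.mem_singleton,
      Finset.sum_singleton, defD, h0, Prod.mk.injEq, and_false, false_and, or_self,
      not_false_eq_true, OfNat.ofNat_ne_zero, one_ne_zero, zero_ne_one] at h₁ h₂
    simp only [skewPart, map_sub, LinearMap.sub_apply]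
    linear_combination (norm := module) h₁ - h₂
      - hcomm x (φ 2 y z) - hcomm y (φ 2 z x) - hcomm z (φ 2 x y)
      + hcomm y (φ 2 x z) + hcomm x (φ 2 z y) + hcomm z (φ 2 y x)
      - congrArg (φ 2 x) (hcomm y z) - congrArg (φ 2 y) (hcomm z x)
      - congrArg (φ 2 z) (hcomm x y)
      + congrArg (fun t => φ 2 t z) (hcomm x y)
      + congrArg (fun t => φ 2 t x) (hcomm y z)
      + congrArg (fun t => φ 2 t y) (hcomm z x)
  · intro x y z
    have h := hdef 1 x y z
    rw [show (Finset.HasAntidiagonal.antidiagonal 1 : Finset (ℕ×ℕ)) = {(0,1),(1,0)} from rfl] at h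
    simp only [Finset.sum_insert, Finset.mem_insert, Finset.mem_singleton,
      Finset.sum_singleton, defD, h0, Prod.mk.injEq, and_false, false_and, or_self,
      not_false_eq_true, zero_ne_one] at h
    simp only [skewPart]
    linear_combination (norm := module) -h
      + hcomm x (φ 1 y z) + hcomm y (φ 1 z x) + hcomm z (φ 1 x y)
end

section
/- Let μ₀ be a commutative multiplication on A satisfying the Leibniz identity μ₀(x,μ₀(y,z)) = μ₀(μ₀(x,y),z) + μ₀(y,μ₀(x,z)) for all x,y,z (a commutative Leibniz algebra). Let (φ_i)_{i≥0} be a Leibniz formal deformation of μ₀, i.e. φ₀ = μ₀ and for every k ≥ 0 and all x,y,z ∈ A: ∑_{i+j=k} [φ_i(x,φ_j(y,z)) − φ_i(φ_j(x,y),z) − φ_i(y,φ_j(x,z))] = 0. Then the skew-symmetric part ψ₁ of φ₁ satisfies μ₀(x,ψ₁(y,z)) − ψ₁(y,μ₀(x,z)) − ψ₁(μ₀(x,y),z) = 0 for all x,y,z ∈ A; that is, (A,μ₀,ψ₁) is a pseudo-Poisson structure. -/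
open Finset

/-- If `(φ_i)` is a Leibniz formal deformation of a commutative Leibniz multiplication
`μ₀`, then the skew-symmetric part `ψ₁` of `φ₁` satisfies
`μ₀(x,ψ₁(y,z)) − ψ₁(y,μ₀(x,z)) − ψ₁(μ₀(x,y),z) = 0`:
`(A, μ₀, ψ₁)` is a pseudo-Poisson structure. -/
theorem leibniz_deformation_pseudo_poisson {K A : Type*} [Field K] [CharZero K]
    [AddCommGroup A] [Module K A]
    (μ₀ : A →ₗ[K] A →ₗ[K] A)
    (hcomm : ∀ x y : A, μ₀ x y = μ₀ y x)
    (hleib : ∀ x y z : A, μ₀ x (μ₀ y z) = μ₀ (μ₀ x y) z + μ₀ y (μ₀ x z))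
    (φ : ℕ → (A →ₗ[K] A →ₗ[K] A))
    (h0 : φ 0 = μ₀)
    (hdef : ∀ k : ℕ, ∀ x y z : A,
      ∑ p ∈ Finset.HasAntidiagonal.antidiagonal k,
        (φ p.1 x (φ p.2 y z) - φ p.1 (φ p.2 x y) z - φ p.1 y (φ p.2 x z)) = 0) :
    ∀ x y z : A,
      μ₀ x (skewPart (φ 1) y z) - skewPart (φ 1) y (μ₀ x z) -
        skewPart (φ 1) (μ₀ x y) z = 0 := by
  have had : (Finset.HasAntidiagonal.antidiagonal 1 : Finset (ℕ × ℕ)) = {(0, 1), (1, 0)} := by decide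
  have key : ∀ x y z : A,
      μ₀ x (φ 1 y z) - μ₀ (φ 1 x y) z - μ₀ y (φ 1 x z)
        + (φ 1 x (μ₀ y z) - φ 1 (μ₀ x y) z - φ 1 y (μ₀ x z)) = 0 := by
    intro x y z
    have h := hdef 1 x y z
    rw [had, Finset.sum_insert (by decide), Finset.sum_singleton] at h
    simp only [h0] at h
    rw [← h]
  intro x y z
  have h1 := key x y z
  have h2 := key x z y
  rw [hcomm (φ 1 x z) y, hcomm z (φ 1 x y), hcomm z y] at h2
  simp only [skewPart, map_sub, LinearMap.sub_apply]
  have h4 := sub_eq_zero_of_eq (h1.trans h2.symm)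
  rw [← h4]
  abel
end

section
/- Let ρ be a symmetric K-bilinear map on A (ρ(x,y) = ρ(y,x)) and ψ a skew-symmetric K-bilinear map on A (ψ(x,y) = −ψ(y,x)), and define μ(x,y) = ρ(x,y) + ψ(x,y). Then μ is associative if and only if both of the following hold for all x,y,z ∈ A: (1) ψ(x,ρ(y,z)) = ρ(ψ(x,y),z) + ρ(y,ψ(x,z)); (2) ψ(y,ψ(x,z)) = ρ(ρ(x,y),z) − ρ(x,ρ(y,z)). -/
/-- Polarization for associativity: if `μ = ρ + ψ` with `ρ` symmetric and `ψ`
skew-symmetric bilinear maps, then `μ` is associative iff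
`ψ(x,ρ(y,z)) = ρ(ψ(x,y),z) + ρ(y,ψ(x,z))` and
`ψ(y,ψ(x,z)) = ρ(ρ(x,y),z) − ρ(x,ρ(y,z))` for all `x,y,z`. -/
theorem associative_iff_polarization {K A : Type*} [Field K] [CharZero K]
    [AddCommGroup A] [Module K A]
    (ρ ψ : A →ₗ[K] A →ₗ[K] A)
    (hρ : ∀ x y : A, ρ x y = ρ y x)
    (hψ : ∀ x y : A, ψ x y = -ψ y x) :
    (∀ x y z : A, (ρ + ψ) x ((ρ + ψ) y z) = (ρ + ψ) ((ρ + ψ) x y) z) ↔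
    ((∀ x y z : A, ψ x (ρ y z) = ρ (ψ x y) z + ρ y (ψ x z)) ∧
     (∀ x y z : A, ψ y (ψ x z) = ρ (ρ x y) z - ρ x (ρ y z))) := by
  have innρ : ∀ (T : A →ₗ[K] A) (b c : A), T (ρ b c) = T (ρ c b) :=
    fun T b c => congrArg T (hρ b c)
  have innψ : ∀ (T : A →ₗ[K] A) (b c : A), T (ψ b c) = - T (ψ c b) :=
    fun T b c => by rw [hψ b c, map_neg]
  constructor
  · intro h
    have h' : ∀ a b c : A,
        ρ a (ρ b c) + ρ a (ψ b c) + ψ a (ρ b c) + ψ a (ψ b c) =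
        ρ (ρ a b) c + ρ (ψ a b) c + ψ (ρ a b) c + ψ (ψ a b) c := by
      intro a b c
      have := h a b c
      simp only [LinearMap.add_apply, map_add] at this
      linear_combination (norm := module) this
    refine ⟨fun x y z => ?_, fun x y z => ?_⟩
    · have key : (4:K) • (ψ x (ρ y z)) = (4:K) • (ρ (ψ x y) z + ρ y (ψ x z)) := by
        linear_combination (norm := module) (h' x y z) + (h' x z y) - (h' y x z) + (h' y z x) - (h' z x y) + (h' z y x) + (hρ (ρ y z) x) + (hρ (ρ z y) x) + (hρ (ρ x z) y) + (2:K) • (innρ (ρ y) x z) - (hρ (ρ z x) y) + (hρ (ρ x y) z) + (2:K) • (innρ (ρ z) x y) - (hρ (ρ y x) z) + (hρ (ψ y z) x) + (hρ (ψ z y) x) + (hρ (ψ x z) y) - (2:K) • (innψ (ρ y) x z) - (hρ (ψ z x) y) - (3:K) • (hρ (ψ x y) z) - (2:K) • (innψ (ρ z) x y) - (hρ (ψ y x) z) + (hψ (ρ y z) x) + (2:K) • (innρ (ψ x) y z) + (hψ (ρ z y) x) + (hψ (ρ x z) y) - (hψ (ρ z x) y) + (hψ (ρ x y) z) - (hψ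 (ρ y x) z) + (hψ (ψ y z) x) - (2:K) • (innψ (ψ x) y z) + (hψ (ψ z y) x) + (hψ (ψ x z) y) - (hψ (ψ z x) y) + (hψ (ψ x y) z) - (hψ (ψ y x) z)
      exact smul_right_injective A (by norm_num : (4:K) ≠ 0) key
    · have key : (4:K) • (ψ y (ψ x z)) = (4:K) • (ρ (ρ x y) z - ρ x (ρ y z)) := by
        linear_combination (norm := module) (h' x y z) + (h' x z y) + (h' y x z) - (h' y z x) - (h' z x y) - (h' z y x) - (hρ (ρ y z) x) + (2:K) • (innρ (ρ x) y z) - (hρ (ρ z y) x) + (hρ (ρ x z) y) - (hρ (ρ z x) y) - (3:K) • (hρ (ρ x y) z) - (2:K) • (innρ (ρ z) x y) + (hρ (ρ y x) z) - (hρ (ψ y z) x) - (2:K) • (innψ (ρ x) y z) - (hρ (ψ z y) x) + (hρ (ψ x z) y) - (hρ (ψ z x) y) + (hρ (ψ x y) z) + (2:K) • (innψ (ρ z) x y) + (hρ (ψ y x) z) - (hψ (ρ y z) x) - (hψ (ρ z y) x) + (hψ (ρ x z) y) - (2:K) • (innρ (ψ y) x z) - (hψ (ρ z x) y) + (hψ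 (ρ x y) z) + (hψ (ρ y x) z) - (hψ (ψ y z) x) - (hψ (ψ z y) x) + (hψ (ψ x z) y) + (2:K) • (innψ (ψ y) x z) - (hψ (ψ z x) y) + (hψ (ψ x y) z) + (hψ (ψ y x) z)
      exact smul_right_injective A (by norm_num : (4:K) ≠ 0) key
  · rintro ⟨h1, h2⟩ x y z
    simp only [LinearMap.add_apply, map_add]
    linear_combination (norm := module) (h1 x y z) + (h1 z x y) + (h2 x z y) + (h2 y x z) + (innρ (ρ x) y z) + (hρ (ρ x z) y) - (hρ (ρ x y) z) - (innρ (ρ z) x y) + (hρ (ρ y x) z) + (innψ (ρ x) y z) + (innψ (ρ y) x z) + (hρ (ψ z x) y) - (hψ (ρ x y) z) - (hψ (ψ x y) z)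
end
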